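/- For every integer n ≥ 3 and every integer k with |k| ≤ n^{2/3}, one has a_{k,n} ≤ (πn)^{-1/2} · exp(−k²/n) · exp(n^{−1/3}). -/

import Mathlib

open Real

section Aux
open Filter Nat

private lemma sqrt_pi_le_stirling (n : ℕ) (hn : 1 ≤ n) : Real.sqrt π ≤ Stirling.stirlingSeq n := by
  obtain ⟨m, rfl⟩ := Nat.exists_eq_add_of_le hn
  have h := Stirling.stirlingSeq'_antitone.le_of_tendsto
    (Stirling.tendsto_stirlingSeq_sqrt_pi.comp (tendsto_add_atTop_nat 1)) m
  simpa [Function.comp, Nat.succ_eq_add_one, add_comm] using h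

private lemma stirling_fact (m : ℕ) (hm : 1 ≤ m) :
    (m ! : ℝ) = Stirling.stirlingSeq m * (Real.sqrt (2*m) * ((m:ℝ)/Real.exp 1)^m) := by
  have hm0 : (0:ℝ) < m := by exact_mod_cast hm
  have hd : (0:ℝ) < Real.sqrt (2*m) * ((m:ℝ)/Real.exp 1)^m := by positivity
  rw [Stirling.stirlingSeq, div_mul_cancel₀]
  exact ne_of_gt hd

private lemma central_binom_le (n : ℕ) (hn : 1 ≤ n) :
    (n.centralBinom : ℝ) ≤ 4 ^ n / Real.sqrt (π * n) := by
  have hn0 : (0:ℝ) < n := by exact_mod_cast hn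
  have h2n : 1 ≤ 2*n := by omega
  have hfac : (n.centralBinom : ℝ) * ((n ! : ℝ) * (n ! : ℝ)) = ((2*n)! : ℝ) := by
    have := Nat.choose_mul_factorial_mul_factorial (show n ≤ 2*n by omega)
    rw [Nat.centralBinom]
    have h2 : 2*n - n = n := by omega
    rw [h2] at this
    exact_mod_cast by rw [← this]; ring
  have e1 := stirling_fact n hn
  have e2 := stirling_fact (2*n) h2n
  have hs1 : Real.sqrt π ≤ Stirling.stirlingSeq n := sqrt_pi_le_stirling n hn
  have hs2 : Stirling.stirlingSeq (2*n) ≤ Stirling.stirlingSeq n := by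
    have := Stirling.stirlingSeq'_antitone (show n - 1 ≤ 2*n - 1 by omega)
    simpa [Function.comp, Nat.succ_eq_add_one, Nat.sub_add_cancel hn, Nat.sub_add_cancel h2n]
      using this
  have hs2pos : 0 < Stirling.stirlingSeq (2*n) := by
    have := Stirling.stirlingSeq'_pos (2*n - 1)
    rwa [Nat.sub_add_cancel h2n] at this
  have hpi : (0:ℝ) < Real.sqrt π := Real.sqrt_pos.mpr Real.pi_pos
  have hs1pos : (0:ℝ) < Stirling.stirlingSeq n := lt_of_lt_of_le hpi hs1
  have hcast : ((2*n : ℕ) : ℝ) = 2 * n := by push_cast; ring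
  have hsq2 : Real.sqrt (2*(2*n:ℕ)) = 2 * Real.sqrt n := by
    rw [hcast, show (2:ℝ)*(2*(n:ℝ)) = 4 * n by ring, show (4:ℝ)*(n:ℝ) = 2^2 * n by norm_num,
      Real.sqrt_mul (by positivity), Real.sqrt_sq (by norm_num)]
  have hpow : (((2*n:ℕ):ℝ)/Real.exp 1)^(2*n) = 4^n * (((n:ℝ))/Real.exp 1)^(2*n) := by
    rw [hcast, show (2*(n:ℝ))/Real.exp 1 = 2 * ((n:ℝ)/Real.exp 1) by ring, mul_pow,
      pow_mul, show (2:ℝ)^2 = 4 by norm_num]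
  set C : ℝ := (n.centralBinom : ℝ) with hC
  set s1 := Stirling.stirlingSeq n
  set s2 := Stirling.stirlingSeq (2*n)
  set p := ((n:ℝ)/Real.exp 1)^n with hp
  have hppos : (0:ℝ) < p := by rw [hp]; positivity
  have hsn : (0:ℝ) < Real.sqrt n := Real.sqrt_pos.mpr hn0
  have h2nn : ((n:ℝ)/Real.exp 1)^(2*n) = p^2 := by rw [hp, ← pow_mul, mul_comm]
  have hsqsq : Real.sqrt (2*(n:ℝ)) ^ 2 = 2 * n := Real.sq_sqrt (by positivity)
  have hmss : Real.sqrt (n:ℝ) * Real.sqrt n = n := Real.mul_self_sqrt hn0.le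
  rw [e1, e2, hsq2, hpow, h2nn] at hfac
  have hkey : C * (s1^2 * Real.sqrt n) = s2 * 4^n := by
    have h2 : C * (s1^2 * Real.sqrt n) * (2*Real.sqrt n*p^2) = s2 * 4^n * (2*Real.sqrt n*p^2) := by
      linear_combination hfac + (2*C*s1^2*p^2)*hmss - (C*s1^2*p^2)*hsqsq
    exact mul_right_cancel₀ (by positivity) h2
  have hCeq : C = s2 / s1^2 * (4^n / Real.sqrt n) := by
    field_simp
    linear_combination hkey
  rw [hCeq, Real.sqrt_mul (le_of_lt Real.pi_pos)]
  have h1 : s2 / s1^2 ≤ (Real.sqrt π)⁻¹ := by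
    rw [div_le_iff₀ (by positivity), inv_mul_eq_div, le_div_iff₀ hpi]
    nlinarith
  calc s2 / s1^2 * (4 ^ n / Real.sqrt n)
      ≤ (Real.sqrt π)⁻¹ * (4 ^ n / Real.sqrt n) := by
        have hx : (0:ℝ) ≤ 4 ^ n / Real.sqrt n := by positivity
        exact mul_le_mul_of_nonneg_right h1 hx
    _ = 4 ^ n / (Real.sqrt π * Real.sqrt n) := by field_simp

private lemma key_exp (u : ℝ) (h0 : 0 ≤ u) (h1 : u ≤ 1/2) :
    (1-u)/(1+u) ≤ Real.exp (-(2*u)) := by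
  have hb := Real.exp_bound (x := 2*u) (by rw [abs_of_nonneg (by linarith)]; linarith)
    (n := 3) (by norm_num)
  have habs : |2*u| = 2*u := abs_of_nonneg (by linarith)
  rw [habs] at hb
  have hsum : ∑ m ∈ Finset.range 3, (2*u) ^ m / m.factorial = 1 + 2*u + 2*u^2 := by
    simp [Finset.sum_range_succ, Nat.factorial]
    ring
  rw [hsum] at hb
  have hub : Real.exp (2*u) ≤ 1 + 2*u + 2*u^2 + (16/9)*u^3 := by
    have := abs_le.mp hb
    norm_num [Nat.factorial] at this ⊢
    nlinarith [this.2]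
  rw [Real.exp_neg, div_le_iff₀ (by linarith : (0:ℝ) < 1+u), inv_mul_eq_div,
    le_div_iff₀ (Real.exp_pos _)]
  nlinarith [Real.exp_pos (2*u)]

private lemma cubic_aux (x : ℝ) (h3 : 3 ≤ x) (h6 : (x+2)^3 ≤ 8*x^2) : False := by
  nlinarith

private lemma ratio_le (a b : ℝ) (ha : 0 < a) (hb : 0 ≤ b) (hba : 2*b ≤ a) :
    (a-b)/(a+b) ≤ Real.exp (-(2*b)/a) := by
  have h0 : 0 ≤ b/a := by positivity
  have h1 : b/a ≤ 1/2 := by rw [div_le_div_iff₀ ha (by norm_num)]; linarith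
  have h := key_exp (b/a) h0 h1
  have e1 : (1 - b/a)/(1 + b/a) = (a-b)/(a+b) := by
    rw [div_eq_div_iff (by positivity) (by positivity)]
    field_simp
  have e2 : -(2*(b/a)) = -(2*b)/a := by field_simp
  rw [e1, e2] at h
  exact h

private lemma choose_le_exp (n : ℕ) (hn : 1 ≤ n) : ∀ K : ℕ, 2*K ≤ n+1 →
    ((2*n).choose (n+K) : ℝ) ≤ (n.centralBinom : ℝ) * Real.exp (-(K:ℝ)^2/((n:ℝ)+1/2))
  | 0, _ => by simp [Nat.centralBinom]
  | (K+1), hK => by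
    have hn0 : (0:ℝ) < n := by exact_mod_cast hn
    have hKn : K + 1 ≤ n := by omega
    have hKnr : (K:ℝ) + 1 ≤ n := by exact_mod_cast hKn
    have ih := choose_le_exp n hn K (by omega)
    have hpos : (0:ℝ) < (n:ℝ)+(K:ℝ)+1 := by positivity
    have hid : ((2*n).choose (n+(K+1)) : ℝ) * ((n:ℝ)+(K:ℝ)+1)
        = ((2*n).choose (n+K) : ℝ) * ((n:ℝ) - (K:ℝ)) := by
      have h := Nat.choose_succ_right_eq (2*n) (n+K)
      have hsub : 2*n - (n+K) = n - K := by omega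
      rw [hsub] at h
      have hcast : (((2*n).choose (n+(K+1))):ℝ) * ((n:ℝ)+(K:ℝ)+1)
          = (((2*n).choose (n+K)):ℝ) * (((n-K:ℕ)):ℝ) := by exact_mod_cast h
      rw [Nat.cast_sub (show K ≤ n by omega)] at hcast
      exact hcast
    have heq : ((2*n).choose (n+(K+1)) : ℝ)
        = ((2*n).choose (n+K) : ℝ) * (((n:ℝ) - K)/((n:ℝ)+K+1)) := by
      field_simp
      linear_combination hid
    have hterm : ((n:ℝ) - K)/((n:ℝ)+K+1) ≤ Real.exp (-(2*((K:ℝ)+1/2))/((n:ℝ)+1/2)) := by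
      have hKreal : 2*(K:ℝ)+2 ≤ (n:ℝ)+1 := by exact_mod_cast (show 2*K+2 ≤ n+1 by omega)
      have := ratio_le ((n:ℝ)+1/2) ((K:ℝ)+1/2) (by positivity) (by positivity)
        (by linarith)
      have e1 : (n:ℝ)+1/2 - ((K:ℝ)+1/2) = (n:ℝ) - K := by ring
      have e2 : (n:ℝ)+1/2 + ((K:ℝ)+1/2) = (n:ℝ)+K+1 := by ring
      rwa [e1, e2] at this
    have hratio_nonneg : (0:ℝ) ≤ ((n:ℝ) - K)/((n:ℝ)+K+1) := by
      apply div_nonneg _ (le_of_lt hpos); linarith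
    calc ((2*n).choose (n+(K+1)) : ℝ)
        = ((2*n).choose (n+K) : ℝ) * (((n:ℝ) - K)/((n:ℝ)+K+1)) := heq
      _ ≤ ((n.centralBinom : ℝ) * Real.exp (-(K:ℝ)^2/((n:ℝ)+1/2)))
            * Real.exp (-(2*((K:ℝ)+1/2))/((n:ℝ)+1/2)) := by
          apply mul_le_mul ih hterm hratio_nonneg
          positivity
      _ = (n.centralBinom : ℝ) * Real.exp (-((K:ℝ)+1)^2/((n:ℝ)+1/2)) := by
          rw [mul_assoc, ← Real.exp_add]
          congr 2
          have hm : ((n:ℝ)+1/2) ≠ 0 := by positivity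
          field_simp
          ring
      _ = (n.centralBinom : ℝ) * Real.exp (-((K+1:ℕ):ℝ)^2/((n:ℝ)+1/2)) := by
          push_cast
          ring_nf

end Aux

/-- `a n k = C(2n, n+k) · 2^(-2n)`. -/
noncomputable def a (n : ℕ) (k : ℤ) : ℝ :=
  ((2 * n).choose ((n : ℤ) + k).toNat : ℝ) * (2 : ℝ) ^ (-(2 * (n : ℤ)))

set_option maxHeartbeats 1000000 in
theorem stmt_15 (n : ℕ) (hn : 3 ≤ n) (k : ℤ) (hk : (|k| : ℝ) ≤ (n : ℝ) ^ ((2 : ℝ) / 3)) :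
    a n k ≤ (Real.sqrt (Real.pi * n))⁻¹ * Real.exp (-((k : ℝ) ^ 2 / n)) *
      Real.exp ((n : ℝ) ^ (-(1 : ℝ) / 3)) := by
  have hn1 : (1:ℝ) ≤ n := by exact_mod_cast (by omega : 1 ≤ n)
  have hn0 : (0:ℝ) < n := by linarith
  have hn3 : (3:ℝ) ≤ n := by exact_mod_cast hn
  set K : ℕ := k.natAbs with hKdef
  have habs : ((K:ℝ)) = |(k:ℝ)| := by
    rw [hKdef, Nat.cast_natAbs, Int.cast_abs]
  have hKr : (K:ℝ) ≤ (n:ℝ)^((2:ℝ)/3) := by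
    rw [habs]; exact hk
  have hKnr : (K:ℝ) ≤ (n:ℝ) := by
    calc (K:ℝ) ≤ (n:ℝ)^((2:ℝ)/3) := hKr
      _ ≤ (n:ℝ)^((1:ℝ)) := Real.rpow_le_rpow_of_exponent_le hn1 (by norm_num)
      _ = n := Real.rpow_one _
  have hKn : K ≤ n := by exact_mod_cast hKnr
  have hcube : ((n:ℝ)^((2:ℝ)/3))^((3:ℝ)) = (n:ℝ)^((2:ℝ)) := by
    rw [← Real.rpow_mul hn0.le]; norm_num
  have h2K : 2*K ≤ n+1 := by
    by_contra hcon
    push_neg at hcon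
    have h1 : (n:ℝ)+2 ≤ 2*(K:ℝ) := by
      have : n + 2 ≤ 2*K := by omega
      exact_mod_cast this
    have h2 : (n:ℝ)+2 ≤ 2*((n:ℝ)^((2:ℝ)/3)) := by linarith
    have ht0 : (0:ℝ) ≤ (n:ℝ)^((2:ℝ)/3) := Real.rpow_nonneg hn0.le _
    have hc3 : ((n:ℝ)^((2:ℝ)/3))^(3:ℕ) = (n:ℝ)^(2:ℕ) := by
      rw [← Real.rpow_natCast ((n:ℝ)^((2:ℝ)/3)) 3, ← Real.rpow_natCast (n:ℝ) 2]
      rw [show ((3:ℕ):ℝ) = (3:ℝ) by norm_num, show ((2:ℕ):ℝ) = (2:ℝ) by norm_num]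
      exact hcube
    have h3 : ((n:ℝ)+2)^3 ≤ (2*((n:ℝ)^((2:ℝ)/3)))^3 :=
      pow_le_pow_left₀ (by linarith) h2 3
    have h4 : (2*((n:ℝ)^((2:ℝ)/3)))^3 = 8*(n:ℝ)^2 := by
      rw [mul_pow, hc3]; norm_num
    have h6 : ((n:ℝ)+2)^3 ≤ 8*(n:ℝ)^2 := by rw [← h4]; exact h3
    exact cubic_aux (n:ℝ) hn3 h6
  -- reduce `a n k` to a binomial coefficient with nonnegative offset
  have hchoose : (2*n).choose (((n:ℤ)+k).toNat) = (2*n).choose (n+K) := by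
    rcases le_or_gt 0 k with h | h
    · congr 1; omega
    · have hidx : ((n:ℤ)+k).toNat = n - K := by omega
      rw [hidx, ← Nat.choose_symm (show n+K ≤ 2*n by omega)]
      congr 1; omega
  have hzpow : (2:ℝ)^(-(2*(n:ℤ))) = ((4:ℝ)^n)⁻¹ := by
    rw [show (-(2*(n:ℤ))) = -((2*n:ℕ):ℤ) by push_cast; ring, zpow_neg, zpow_natCast, pow_mul]
    norm_num
  have ha : a n k = ((2*n).choose (n+K) : ℝ) * ((4:ℝ)^n)⁻¹ := by
    rw [a, hchoose, hzpow]
  have hcb := central_binom_le n (by omega)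
  have hind := choose_le_exp n (by omega) K h2K
  have hsqrt_pos : (0:ℝ) < Real.sqrt (π * n) := Real.sqrt_pos.mpr (by positivity)
  have hstep : a n k ≤ (Real.sqrt (π * n))⁻¹ * Real.exp (-(K:ℝ)^2/((n:ℝ)+1/2)) := by
    rw [ha]
    calc ((2*n).choose (n+K) : ℝ) * ((4:ℝ)^n)⁻¹
        ≤ ((n.centralBinom : ℝ) * Real.exp (-(K:ℝ)^2/((n:ℝ)+1/2))) * ((4:ℝ)^n)⁻¹ := by
          apply mul_le_mul_of_nonneg_right hind (by positivity)
      _ ≤ ((4:ℝ)^n / Real.sqrt (π * n) * Real.exp (-(K:ℝ)^2/((n:ℝ)+1/2))) * ((4:ℝ)^n)⁻¹ := by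
          apply mul_le_mul_of_nonneg_right _ (by positivity)
          apply mul_le_mul_of_nonneg_right hcb (le_of_lt (Real.exp_pos _))
      _ = (Real.sqrt (π * n))⁻¹ * Real.exp (-(K:ℝ)^2/((n:ℝ)+1/2)) := by
          field_simp
  refine hstep.trans ?_
  rw [mul_assoc, ← Real.exp_add]
  apply mul_le_mul_of_nonneg_left _ (le_of_lt (inv_pos.mpr hsqrt_pos))
  apply Real.exp_le_exp.mpr
  -- numeric inequality: -K²/(n+1/2) ≤ -k²/n + n^(-1/3)
  have hk2 : (k:ℝ)^2 = (K:ℝ)^2 := by rw [← sq_abs, ← habs]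
  rw [hk2]
  have hm0 : (0:ℝ) < (n:ℝ)+1/2 := by linarith
  have hK2 : (K:ℝ)^2 ≤ (n:ℝ)^((4:ℝ)/3) := by
    have h4 : ((n:ℝ)^((2:ℝ)/3))^(2:ℕ) = (n:ℝ)^((4:ℝ)/3) := by
      rw [← Real.rpow_natCast ((n:ℝ)^((2:ℝ)/3)) 2, ← Real.rpow_mul hn0.le]
      norm_num
    have hK0 : (0:ℝ) ≤ (K:ℝ) := by positivity
    nlinarith [hKr]
  have h53 : (n:ℝ)^(2:ℕ) * (n:ℝ)^(-(1:ℝ)/3) = (n:ℝ)^((5:ℝ)/3) := by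
    rw [← Real.rpow_natCast (n:ℝ) 2, ← Real.rpow_add hn0]
    norm_num
  have h5 : (n:ℝ)^((4:ℝ)/3) ≤ 2 * ((n:ℝ)^(2:ℕ) * (n:ℝ)^(-(1:ℝ)/3)) := by
    rw [h53]
    have : (n:ℝ)^((4:ℝ)/3) ≤ (n:ℝ)^((5:ℝ)/3) := Real.rpow_le_rpow_of_exponent_le hn1 (by norm_num)
    have hpos : (0:ℝ) ≤ (n:ℝ)^((5:ℝ)/3) := Real.rpow_nonneg hn0.le _
    linarith
  have hdiff : (K:ℝ)^2/(n:ℝ) - (K:ℝ)^2/((n:ℝ)+1/2) ≤ (n:ℝ)^(-(1:ℝ)/3) := by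
    have e : (K:ℝ)^2/(n:ℝ) - (K:ℝ)^2/((n:ℝ)+1/2) = (K:ℝ)^2 / (2*((n:ℝ)*((n:ℝ)+1/2))) := by
      field_simp
      ring
    rw [e]
    have hb0 : (0:ℝ) < 2*((n:ℝ)*((n:ℝ)+1/2)) := by positivity
    rw [div_le_iff₀ hb0]
    have hrp : (0:ℝ) ≤ (n:ℝ)^(-(1:ℝ)/3) := Real.rpow_nonneg hn0.le _
    calc (K:ℝ)^2 ≤ (n:ℝ)^((4:ℝ)/3) := hK2
      _ ≤ 2 * ((n:ℝ)^(2:ℕ) * (n:ℝ)^(-(1:ℝ)/3)) := h5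
      _ ≤ (n:ℝ)^(-(1:ℝ)/3) * (2*((n:ℝ)*((n:ℝ)+1/2))) := by
          have : (n:ℝ)^(2:ℕ) = (n:ℝ)*(n:ℝ) := by ring
          rw [this]
          have h9 : 0 ≤ (n:ℝ)^(-(1:ℝ)/3) * (n:ℝ) := mul_nonneg hrp hn0.le
          linarith [h9, (by ring : (n:ℝ)^(-(1:ℝ)/3) * (2*((n:ℝ)*((n:ℝ)+1/2))) = 2*((n:ℝ)*(n:ℝ)*((n:ℝ)^(-(1:ℝ)/3))) + (n:ℝ)^(-(1:ℝ)/3) * (n:ℝ))]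
  rw [neg_div]
  linarith [hdiff]
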